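/- arXiv:2412.11190 — 3 statements merged into one kernel-verified Lean document; each statement's English description precedes it below -/
import Mathlib

section
/- Let 0 < δ ≤ Δ ≤ 1 and 0 < Δ' ≤ Δ. Consider the circular arc C centered at the point ((δ² + Δ²)/(2δ), 0) passing through (0,0) and (δ, Δ). If q is a point on C with y-coordinate Δ' and θ is the angle of the sub-arc of C from (0,0) to q, then θ ≥ Δ' δ / Δ². -/
open InnerProductGeometry

lemma one_sub_cos_le_half_sq' (x : ℝ) (hx : 0 ≤ x) : 1 - Real.cos x ≤ x ^ 2 / 2 := by
  have h : Real.sin (x / 2) ^ 2 = 1 / 2 - Real.cos (2 * (x / 2)) / 2 :=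
    Real.sin_sq_eq_half_sub (x / 2)
  rw [show 2 * (x / 2) = x by ring] at h
  have h2 : Real.sin (x / 2) ^ 2 ≤ (x / 2) ^ 2 := by
    have hb : |Real.sin (x/2)| ≤ |x/2| := Real.abs_sin_le_abs
    calc Real.sin (x/2) ^ 2 = |Real.sin (x/2)| ^ 2 := (sq_abs _).symm
      _ ≤ |x/2| ^ 2 := pow_le_pow_left₀ (abs_nonneg _) hb 2
      _ = (x/2) ^ 2 := sq_abs _
  nlinarith

lemma chord_le_radius_mul_angle {V : Type*} [NormedAddCommGroup V] [InnerProductSpace ℝ V]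
    (x y : V) (r : ℝ) (hx : ‖x‖ = r) (hy : ‖y‖ = r) :
    ‖x - y‖ ≤ r * angle x y := by
  have hr : 0 ≤ r := hx ▸ norm_nonneg x
  set θ := angle x y with hθ
  have hθ0 : 0 ≤ θ := angle_nonneg x y
  have hcos : Real.cos θ * (‖x‖ * ‖y‖) = inner ℝ x y :=
    cos_angle_mul_norm_mul_norm x y
  have hsq : ‖x - y‖ ^ 2 = 2 * r ^ 2 * (1 - Real.cos θ) := by
    have := @norm_sub_sq_real V _ _ x y
    rw [this, hx, hy] at *
    nlinarith [hcos]
  have h1 : 1 - Real.cos θ ≤ θ ^ 2 / 2 := one_sub_cos_le_half_sq' θ hθ0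
  have h2 : ‖x - y‖ ^ 2 ≤ (r * θ) ^ 2 := by nlinarith
  have hrt : 0 ≤ r * θ := mul_nonneg hr hθ0
  nlinarith [norm_nonneg (x - y), h2]

set_option maxHeartbeats 1000000 in
/-- Let `0 < δ ≤ Δ ≤ 1`, `0 < Δ' ≤ Δ`, and let `C` be the circle centered at
`c = ((δ²+Δ²)/(2δ), 0)` through `(0,0)` (and `(δ,Δ)`).  If `q` lies on `C` with
`y`-coordinate `Δ'`, and `θ` is the angle of the sub-arc of `C` from `(0,0)` to `q`
(i.e. the angle at the center between `(0,0)` and `q`), then `θ ≥ Δ' δ / Δ²`. -/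
theorem stmt4 (δ Δ Δ' : ℝ) (hδ : 0 < δ) (hδΔ : δ ≤ Δ) (hΔ : Δ ≤ 1)
    (hΔ' : 0 < Δ') (hΔ'Δ : Δ' ≤ Δ)
    (c q : EuclideanSpace ℝ (Fin 2))
    (hc0 : c 0 = (δ ^ 2 + Δ ^ 2) / (2 * δ)) (hc1 : c 1 = 0)
    (hq : ‖q - c‖ = ‖c‖)  -- `q` is on the circle through the origin
    (hqy : q 1 = Δ')
    (θ : ℝ) (hθ : θ = angle (0 - c) (q - c)) :
    Δ' * δ / Δ ^ 2 ≤ θ := by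
  have hc0pos : 0 < c 0 := by rw [hc0]; positivity
  have hcnorm : ‖c‖ = c 0 := by
    rw [EuclideanSpace.norm_eq, Fin.sum_univ_two, hc1]
    simp only [Real.norm_eq_abs, sq_abs, norm_zero]
    rw [show c 0 ^ 2 + 0 ^ 2 = (c 0) ^ 2 by ring, Real.sqrt_sq hc0pos.le]
  have h0c : ‖(0 : EuclideanSpace ℝ (Fin 2)) - c‖ = ‖c‖ := by simp
  have hchord : ‖(0 : EuclideanSpace ℝ (Fin 2)) - c - (q - c)‖ ≤ ‖c‖ * θ := by
    rw [hθ, angle_comm, norm_sub_rev]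
    exact chord_le_radius_mul_angle (q - c) ((0 : EuclideanSpace ℝ (Fin 2)) - c) ‖c‖ hq h0c
  have hqn : ‖(0 : EuclideanSpace ℝ (Fin 2)) - c - (q - c)‖ = ‖q‖ := by
    rw [show (0 : EuclideanSpace ℝ (Fin 2)) - c - (q - c) = -q by abel, norm_neg]
  have hqge : Δ' ≤ ‖q‖ := by
    rw [EuclideanSpace.norm_eq]
    have : Δ' = Real.sqrt (Δ' ^ 2) := by rw [Real.sqrt_sq hΔ'.le]
    rw [this]
    apply Real.sqrt_le_sqrt
    simp [Fin.sum_univ_two, hqy]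
    positivity
  have key : Δ' ≤ ‖c‖ * θ := by
    calc Δ' ≤ ‖q‖ := hqge
      _ = _ := hqn.symm
      _ ≤ ‖c‖ * θ := hchord
  have hθ0 : 0 ≤ θ := hθ ▸ angle_nonneg _ _
  have hΔpos : 0 < Δ := lt_of_lt_of_le hδ hδΔ
  have hcle : ‖c‖ ≤ Δ ^ 2 / δ := by
    rw [hcnorm, hc0, div_le_div_iff₀ (by positivity) hδ]
    nlinarith [mul_le_mul_of_nonneg_right (mul_self_le_mul_self hδ.le hδΔ) hδ.le]
  rw [div_le_iff₀ (pow_pos hΔpos 2)]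
  have : Δ' ≤ (Δ ^ 2 / δ) * θ := le_trans key (by nlinarith [norm_nonneg c])
  rw [div_mul_eq_mul_div, le_div_iff₀ hδ] at this
  nlinarith
end

section
/- Let (δ_n) and (Δ_n) be positive sequences with δ₁ = Δ₁ = 1, Δ_{n+1} ≤ c δ_n^{n+1}, and δ_{n+1} ≤ c Δ_{n+1} δ_n for all n ≥ 1, where 0 < c < 1. Then both sequences are decreasing, converge to 0, and the ratio δ_n / Δ_n tends to 0 as n → ∞. -/
open Filter

/-- If `δ₁ = Δ₁ = 1`, `Δ_{n+1} ≤ c δ_n^{n+1}` and `δ_{n+1} ≤ c Δ_{n+1} δ_n` for all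
`n ≥ 1`, with `0 < c < 1` and both sequences positive, then both sequences are
decreasing, tend to `0`, and `δ_n / Δ_n → 0`. -/
theorem stmt6 (c : ℝ) (hc0 : 0 < c) (hc1 : c < 1)
    (δ Δ : ℕ → ℝ)
    (hδpos : ∀ n, 1 ≤ n → 0 < δ n) (hΔpos : ∀ n, 1 ≤ n → 0 < Δ n)
    (hδ1 : δ 1 = 1) (hΔ1 : Δ 1 = 1)
    (hΔ : ∀ n, 1 ≤ n → Δ (n + 1) ≤ c * δ n ^ (n + 1))
    (hδ : ∀ n, 1 ≤ n → δ (n + 1) ≤ c * Δ (n + 1) * δ n) :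
    (∀ n, 1 ≤ n → δ (n + 1) < δ n) ∧ (∀ n, 1 ≤ n → Δ (n + 1) < Δ n) ∧
    Tendsto δ atTop (nhds 0) ∧ Tendsto Δ atTop (nhds 0) ∧
    Tendsto (fun n => δ n / Δ n) atTop (nhds 0) := by
  have hc0' : (0:ℝ) ≤ c := hc0.le
  -- δ (n+1) ≤ 1
  have hδ1' : ∀ n : ℕ, δ (n + 1) ≤ 1 := by
    intro n
    induction n with
    | zero => simpa using hδ1.le
    | succ m ih =>
      have hm : 1 ≤ m + 1 := Nat.le_add_left 1 m
      have h1 := hΔ (m + 1) hm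
      have h2 := hδ (m + 1) hm
      have hp : δ (m + 1) ^ (m + 1 + 1) ≤ 1 :=
        pow_le_one₀ (hδpos (m + 1) hm).le ih
      have hΔp := hΔpos (m + 2) (by omega)
      have hδp := hδpos (m + 1) hm
      have hΔ'le : Δ (m + 2) ≤ c := by nlinarith
      calc δ (m + 1 + 1) ≤ c * Δ (m + 1 + 1) * δ (m + 1) := h2
        _ ≤ c * c * 1 := by
            apply mul_le_mul (mul_le_mul_of_nonneg_left hΔ'le hc0') ih hδp.le (by positivity)
        _ ≤ 1 := by nlinarith
  have hδle : ∀ n, 1 ≤ n → δ n ≤ 1 := by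
    intro n hn
    obtain ⟨m, rfl⟩ := Nat.exists_eq_succ_of_ne_zero (Nat.one_le_iff_ne_zero.mp hn)
    exact hδ1' m
  -- Δ (n+1) ≤ c
  have hΔc : ∀ n, 1 ≤ n → Δ (n + 1) ≤ c := by
    intro n hn
    have h1 := hΔ n hn
    have hp : δ n ^ (n + 1) ≤ 1 := pow_le_one₀ (hδpos n hn).le (hδle n hn)
    nlinarith
  -- δ strictly decreasing
  have hδdec : ∀ n, 1 ≤ n → δ (n + 1) < δ n := by
    intro n hn
    calc δ (n + 1) ≤ c * Δ (n + 1) * δ n := hδ n hn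
      _ < 1 * δ n := by
          apply mul_lt_mul_of_pos_right _ (hδpos n hn)
          nlinarith [hΔc n hn, hΔpos (n + 1) (by omega : 1 ≤ n + 1)]
      _ = δ n := one_mul _
  -- δ (n+1) ≤ c * δ n
  have hδstep : ∀ n, 1 ≤ n → δ (n + 1) ≤ c * δ n := by
    intro n hn
    have h2 := hδ n hn
    have h3 := hΔc n hn
    have hΔ'1 : Δ (n + 1) ≤ 1 := le_trans h3 hc1.le
    calc δ (n + 1) ≤ c * Δ (n + 1) * δ n := h2
      _ ≤ c * 1 * δ n :=
          mul_le_mul_of_nonneg_right (mul_le_mul_of_nonneg_left hΔ'1 hc0') (hδpos n hn).le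
      _ = c * δ n := by ring
  -- bounds by powers of c
  have hδbound : ∀ n : ℕ, δ (n + 1) ≤ c ^ n := by
    intro n
    induction n with
    | zero => simpa using hδ1.le
    | succ m ih =>
      have h1 := hδstep (m + 1) (Nat.le_add_left 1 m)
      calc δ (m + 2) ≤ c * δ (m + 1) := h1
        _ ≤ c * c ^ m := by nlinarith
        _ = c ^ (m + 1) := by ring
  have hΔbound : ∀ n : ℕ, Δ (n + 1) ≤ c ^ n := by
    intro n
    induction n with
    | zero => simpa using hΔ1.le
    | succ m ih =>
      have hm : 1 ≤ m + 1 := Nat.le_add_left 1 m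
      have h1 := hΔ (m + 1) hm
      have hp : δ (m + 1) ^ (m + 1 + 1) ≤ δ (m + 1) :=
        pow_le_of_le_one (hδpos (m + 1) hm).le (hδ1' m) (by omega)
      have h2 := hδbound m
      calc Δ (m + 2) ≤ c * δ (m + 1) ^ (m + 1 + 1) := h1
        _ ≤ c * δ (m + 1) := by nlinarith
        _ ≤ c * c ^ m := by nlinarith [hδbound m]
        _ = c ^ (m + 1) := by ring
  -- Δ strictly decreasing
  have hΔdec : ∀ n, 1 ≤ n → Δ (n + 1) < Δ n := by
    intro n hn
    obtain ⟨m, rfl⟩ := Nat.exists_eq_succ_of_ne_zero (Nat.one_le_iff_ne_zero.mp hn)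
    cases m with
    | zero =>
      have := hΔc 1 le_rfl
      rw [hΔ1]
      linarith
    | succ k =>
      have hk : 1 ≤ k + 1 := Nat.le_add_left 1 k
      have h1 := hΔ (k + 2) (by omega)
      have hp : δ (k + 2) ^ (k + 2 + 1) ≤ δ (k + 2) :=
        pow_le_of_le_one (hδpos (k + 2) (by omega)).le (hδ1' (k + 1)) (by omega)
      have h2 := hδ (k + 1) hk
      have h3 := hδ1' k
      have hΔp := hΔpos (k + 2) (by omega)
      have hδp := hδpos (k + 1) hk
      have hδp2 := hδpos (k + 2) (by omega)
      -- δ (k+2) ≤ c * Δ (k+2)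
      have h4 : δ (k + 2) ≤ c * Δ (k + 2) := by nlinarith
      -- Δ (k+3) ≤ c * δ (k+2) ≤ c^2 * Δ (k+2) < Δ (k+2)
      nlinarith
  have hpow : Tendsto (fun n : ℕ => c ^ n) atTop (nhds 0) :=
    tendsto_pow_atTop_nhds_zero_of_lt_one hc0' hc1
  have hpow' : Tendsto (fun n : ℕ => c ^ (n - 1)) atTop (nhds 0) :=
    hpow.comp (tendsto_sub_atTop_nat 1)
  have htδ : Tendsto δ atTop (nhds 0) := by
    apply squeeze_zero' ?_ ?_ hpow'
    · filter_upwards [eventually_ge_atTop 1] with n hn using (hδpos n hn).le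
    · filter_upwards [eventually_ge_atTop 1] with n hn
      obtain ⟨m, rfl⟩ := Nat.exists_eq_succ_of_ne_zero (Nat.one_le_iff_ne_zero.mp hn)
      simpa using hδbound m
  have htΔ : Tendsto Δ atTop (nhds 0) := by
    apply squeeze_zero' ?_ ?_ hpow'
    · filter_upwards [eventually_ge_atTop 1] with n hn using (hΔpos n hn).le
    · filter_upwards [eventually_ge_atTop 1] with n hn
      obtain ⟨m, rfl⟩ := Nat.exists_eq_succ_of_ne_zero (Nat.one_le_iff_ne_zero.mp hn)
      simpa using hΔbound m
  have htratio : Tendsto (fun n => δ n / Δ n) atTop (nhds 0) := by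
    apply squeeze_zero' ?_ ?_ hpow'
    · filter_upwards [eventually_ge_atTop 1] with n hn
      exact div_nonneg (hδpos n hn).le (hΔpos n hn).le
    · filter_upwards [eventually_ge_atTop 2] with n hn
      obtain ⟨k, rfl⟩ := Nat.exists_eq_add_of_le' hn
      have hk : 1 ≤ k + 1 := Nat.le_add_left 1 k
      have h2 := hδ (k + 1) hk
      have h3 := hδbound k
      have hΔp := hΔpos (k + 2) (by omega)
      have hδp := hδpos (k + 1) hk
      rw [div_le_iff₀ hΔp]
      have : δ (k + 2) ≤ c * Δ (k + 2) * c ^ k := by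
        refine h2.trans ?_
        rw [mul_assoc, mul_assoc]
        apply mul_le_mul_of_nonneg_left _ hc0'
        exact mul_le_mul_of_nonneg_left h3 hΔp.le
      calc δ (k + 2) ≤ c * Δ (k + 2) * c ^ k := this
        _ = c ^ (k + 1) * Δ (k + 2) := by ring
        _ = c ^ (k + 2 - 1) * Δ (k + 2) := by norm_num
  exact ⟨hδdec, hΔdec, htδ, htΔ, htratio⟩
end

section
/- Suppose N ≤ (Δ_n/Δ_{n+1})(1 + c₂ δ_{n-1}) where θ_{n+1} = c Δ_{n+1} δ_n, θ_n = c Δ_n δ_{n-1}, δ_n ≤ c Δ_n δ_{n-1}, Δ_n ≤ 1, δ_{n-1} ≤ 1, and c(1 + c₂) < 1 with c, c₂ > 0. Then N θ_{n+1} < θ_n. -/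
/-- If `N ≤ (Δ_n/Δ_{n+1})(1 + c₂ δ_{n-1})`, `θ_n = c Δ_n δ_{n-1}`,
`θ_{n+1} = c Δ_{n+1} δ_n`, `δ_n ≤ c Δ_n δ_{n-1}`, `Δ_n ≤ 1`, `δ_{n-1} ≤ 1` and
`c(1 + c₂) < 1`, then `N θ_{n+1} < θ_n`. -/
theorem stmt9 (c c₂ Δn Δn1 δn0 δn N θn θn1 : ℝ)
    (hc : 0 < c) (hc₂ : 0 < c₂)
    (hΔn : 0 < Δn) (hΔn1 : 0 < Δn1) (hδn0 : 0 < δn0) (hδn : 0 < δn)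
    (hθn : θn = c * Δn * δn0) (hθn1 : θn1 = c * Δn1 * δn)
    (hδnle : δn ≤ c * Δn * δn0) (hΔnle : Δn ≤ 1) (hδn0le : δn0 ≤ 1)
    (hcc₂ : c * (1 + c₂) < 1)
    (hN : N ≤ (Δn / Δn1) * (1 + c₂ * δn0)) :
    N * θn1 < θn := by
  subst hθn hθn1
  have h1 : N * (c * Δn1 * δn) ≤ (Δn / Δn1) * (1 + c₂ * δn0) * (c * Δn1 * δn) := by
    apply mul_le_mul_of_nonneg_right hN (by positivity)
  have h2 : (Δn / Δn1) * (1 + c₂ * δn0) * (c * Δn1 * δn)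
      = c * Δn * (1 + c₂ * δn0) * δn := by
    field_simp
  rw [h2] at h1
  have h3 : c * Δn * (1 + c₂ * δn0) * δn < δn := by
    have : c * Δn * (1 + c₂ * δn0) < 1 := by nlinarith [mul_nonneg hc.le (mul_nonneg hc₂.le (sub_nonneg.2 hδn0le)), mul_nonneg (sub_nonneg.2 hΔnle) (mul_pos hc (by positivity : (0:ℝ) < 1 + c₂ * δn0)).le]
    nlinarith
  linarith
end
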